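/- Let 𝒥 = (J_i)_{i ∈ ℤ/2n} be an (n,2n)-juggling pattern and let p_𝒥 be the corresponding tuple of coordinate subspaces, (p_𝒥)_i = span{e_j : j ∈ J_i}. If there exists g ∈ G such that τ(g·p_𝒥) = g·p_𝒥, then p_𝒥 itself satisfies τ(p_𝒥) = p_𝒥, equivalently R(𝒥) = 𝒥. -/

import Mathlib

open Matrix

/-- The orthogonal of a subspace `V ⊆ ℂ^m` with respect to the bilinear form
`(v, w)_Ω = vᵀ Ω w`. -/
noncomputable def perp {m : ℕ} (Ω : Matrix (Fin m) (Fin m) ℂ) (V : Submodule ℂ (Fin m → ℂ)) :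
    Submodule ℂ (Fin m → ℂ) where
  carrier := {w | ∀ v ∈ V, v ⬝ᵥ Ω.mulVec w = 0}
  add_mem' := by
    intro a b ha hb v hv
    simp [Matrix.mulVec_add, dotProduct_add, ha v hv, hb v hv]
  zero_mem' := by
    intro v hv
    simp
  smul_mem' := by
    intro c a ha v hv
    simp [Matrix.mulVec_smul, ha v hv]

/-- The Gram matrix of the standard symplectic form: in 1-indexed terms its only nonzero
entries are `Ω_{i, 2n+1-i} = (-1)^(i+1)`; here, 0-indexed, `Ω i j = (-1)^i` when
`i + j = 2n - 1` and `0` otherwise. -/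
def OmegaStd (n : ℕ) : Matrix (Fin (2*n)) (Fin (2*n)) ℂ :=
  fun i j => if (i : ℕ) + (j : ℕ) = 2*n - 1 then (-1 : ℂ)^(i : ℕ) else 0

/-- The matrix of the shift `s` with `s e_j = e_(j+1)` (1-indexed, `s e_(2n) = 0`). -/
def shiftMat (n : ℕ) : Matrix (Fin (2*n)) (Fin (2*n)) ℂ :=
  fun i j => if (i : ℕ) = (j : ℕ) + 1 then 1 else 0

/-- Membership in the group `G`: a tuple of invertible matrices intertwining the shift. -/
def isG (n : ℕ) (g : ZMod (2*n) → Matrix (Fin (2*n)) (Fin (2*n)) ℂ) : Prop :=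
  (∀ i, IsUnit (g i)) ∧ ∀ i, shiftMat n * g i = g (i + 1) * shiftMat n

/-- The action of a tuple of matrices on a tuple of subspaces, `(g·V)_i = g_i (V_i)`. -/
noncomputable def actG (n : ℕ) (g : ZMod (2*n) → Matrix (Fin (2*n)) (Fin (2*n)) ℂ)
    (V : ZMod (2*n) → Submodule ℂ (Fin (2*n) → ℂ)) :
    ZMod (2*n) → Submodule ℂ (Fin (2*n) → ℂ) :=
  fun i => Submodule.map (g i).mulVecLin (V i)

/-- A tuple of subspaces is fixed by `τ` if `(V_(-i))^⊥ = V_i` for all `i`. -/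
def tauFixed (n : ℕ) (V : ZMod (2*n) → Submodule ℂ (Fin (2*n) → ℂ)) : Prop :=
  ∀ i, perp (OmegaStd n) (V (-i)) = V i

/-- A `(k,N)`-juggling pattern: a tuple, indexed by `ℤ/N`, of `k`-element subsets of
`{1,…,N}` such that `j ∈ J_i` and `j ≠ N` imply `j+1 ∈ J_(i+1)`. -/
def IsJP (k N : ℕ) (J : ZMod N → Finset ℕ) : Prop :=
  (∀ i, J i ⊆ Finset.Icc 1 N) ∧ (∀ i, (J i).card = k) ∧
    ∀ i, ∀ j ∈ J i, j ≠ N → j + 1 ∈ J (i + 1)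

/-- `R(J) = {1,…,2n} \ {2n+1-j : j ∈ J}`. -/
def Rset (n : ℕ) (J : Finset ℕ) : Finset ℕ :=
  Finset.Icc 1 (2*n) \ J.image (fun j => 2*n + 1 - j)

/-- `R(𝒥)_i = R(J_(-i))`. -/
def RJP (n : ℕ) (J : ZMod (2*n) → Finset ℕ) : ZMod (2*n) → Finset ℕ :=
  fun i => Rset n (J (-i))

/-- The coordinate subspace of `ℂ^(2n)` spanned by the (1-indexed) standard basis vectors
`e_j` with `j ∈ J`. -/
noncomputable def coordSub (n : ℕ) (J : Finset ℕ) : Submodule ℂ (Fin (2*n) → ℂ) :=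
  Submodule.span ℂ
    {v | ∃ j ∈ J, v = fun t : Fin (2*n) => if (t : ℕ) + 1 = j then (1 : ℂ) else 0}


lemma sum_if_nat {m : ℕ} (t : ℕ) (f : Fin m → ℂ) :
    (∑ b : Fin m, if (b : ℕ) = t then f b else 0)
      = if h : t < m then f ⟨t, h⟩ else 0 := by
  split
  · next h =>
    rw [Finset.sum_eq_single (⟨t, h⟩ : Fin m)]
    · simp
    · intro b _ hb
      rw [if_neg]
      intro hc
      exact hb (Fin.ext hc)
    · simp
  · next h =>
    apply Finset.sum_eq_zero
    intro b _
    rw [if_neg]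
    intro hc
    exact h (hc ▸ b.isLt)

/-- The 1-indexed basis vector `e_j`. -/
def bvec (n j : ℕ) : Fin (2*n) → ℂ := fun t => if (t : ℕ) + 1 = j then 1 else 0

noncomputable def coordSet (n : ℕ) (K : Finset ℕ) : Submodule ℂ (Fin (2*n) → ℂ) where
  carrier := {w | ∀ t : Fin (2*n), (t : ℕ) + 1 ∉ K → w t = 0}
  add_mem' := fun ha hb t ht => by simp only [Pi.add_apply, ha t ht, hb t ht, add_zero]
  zero_mem' := fun t _ => rfl
  smul_mem' := fun c a ha t ht => by simp only [Pi.smul_apply, ha t ht, smul_zero]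

lemma mem_coordSet {n : ℕ} {K : Finset ℕ} {w : Fin (2*n) → ℂ} :
    w ∈ coordSet n K ↔ ∀ t : Fin (2*n), (t : ℕ) + 1 ∉ K → w t = 0 := Iff.rfl

lemma bvec_mem {n : ℕ} {K : Finset ℕ} {j : ℕ} (hj : j ∈ K) : bvec n j ∈ coordSub n K :=
  Submodule.subset_span ⟨j, hj, rfl⟩

lemma single_eq_smul_bvec {n : ℕ} (t : Fin (2*n)) (c : ℂ) :
    Pi.single t c = c • bvec n ((t : ℕ) + 1) := by
  funext s
  by_cases h : s = t
  · subst h; simp [bvec, Pi.single_apply]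
  · have h2 : ¬((s : ℕ) + 1 = (t : ℕ) + 1) := fun hc => h (Fin.ext (by omega))
    simp [bvec, Pi.single_apply, h, h2, Fin.val_inj]

lemma coordSub_eq_coordSet {n : ℕ} (K : Finset ℕ) :
    coordSub n K = coordSet n K := by
  apply le_antisymm
  · rw [coordSub, Submodule.span_le]
    rintro v ⟨j, hj, rfl⟩ t ht
    dsimp only
    rw [if_neg]
    intro hc
    exact ht (hc ▸ hj)
  · intro w hw
    have hsum : w = ∑ t : Fin (2*n), Pi.single t (w t) := (Finset.univ_sum_single w).symm
    rw [hsum]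
    apply Submodule.sum_mem
    intro t _
    by_cases h : (t : ℕ) + 1 ∈ K
    · rw [single_eq_smul_bvec]
      exact Submodule.smul_mem _ _ (bvec_mem h)
    · rw [hw t h, Pi.single_zero]
      exact Submodule.zero_mem _

lemma coordSet_inf {n : ℕ} (K K' : Finset ℕ) :
    coordSet n K ⊓ coordSet n K' = coordSet n (K ∩ K') := by
  ext w
  simp only [Submodule.mem_inf, mem_coordSet, Finset.mem_inter]
  constructor
  · rintro ⟨h1, h2⟩ t ht
    by_cases hk : (t : ℕ) + 1 ∈ K
    · exact h2 t (fun hc => ht ⟨hk, hc⟩)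
    · exact h1 t hk
  · intro h
    exact ⟨fun t ht => h t (fun hc => ht hc.1), fun t ht => h t (fun hc => ht hc.2)⟩

lemma bvec_ne_zero {n : ℕ} {j : ℕ} (h1 : 1 ≤ j) (h2 : j ≤ 2*n) : bvec n j ≠ 0 := by
  intro hc
  have := congrFun hc ⟨j - 1, by omega⟩
  simp only [bvec, Pi.zero_apply] at this
  rw [if_pos (by omega)] at this
  exact one_ne_zero this

lemma coordSub_eq_bot_iff {n : ℕ} {K : Finset ℕ} (hK : K ⊆ Finset.Icc 1 (2*n)) :
    coordSub n K = ⊥ ↔ K = ∅ := by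
  constructor
  · intro h
    by_contra hne
    obtain ⟨j, hj⟩ := Finset.nonempty_iff_ne_empty.2 hne
    have hmem := bvec_mem (n := n) hj
    rw [h, Submodule.mem_bot] at hmem
    have := hK hj
    rw [Finset.mem_Icc] at this
    exact bvec_ne_zero this.1 this.2 hmem
  · intro h
    subst h
    rw [coordSub]
    convert Submodule.span_empty
    ext v
    simp


lemma mem_perp {m : ℕ} {Ω : Matrix (Fin m) (Fin m) ℂ} {V : Submodule ℂ (Fin m → ℂ)}
    {w : Fin m → ℂ} : w ∈ perp Ω V ↔ ∀ v ∈ V, v ⬝ᵥ Ω.mulVec w = 0 := Iff.rfl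

lemma mem_perp_span {m : ℕ} {Ω : Matrix (Fin m) (Fin m) ℂ} {S : Set (Fin m → ℂ)}
    {w : Fin m → ℂ} :
    w ∈ perp Ω (Submodule.span ℂ S) ↔ ∀ v ∈ S, v ⬝ᵥ Ω.mulVec w = 0 := by
  constructor
  · intro h v hv
    exact h v (Submodule.subset_span hv)
  · intro h v hv
    induction hv using Submodule.span_induction with
    | mem x hx => exact h x hx
    | zero => simp
    | add x y _ _ hx hy => rw [add_dotProduct, hx, hy, add_zero]
    | smul c x _ hx => rw [smul_dotProduct, hx, smul_zero]

lemma perp_map {m : ℕ} (Ω : Matrix (Fin m) (Fin m) ℂ) (hΩ : Ω * (-Ω) = 1)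
    (A : Matrix (Fin m) (Fin m) ℂ) (V : Submodule ℂ (Fin m → ℂ)) :
    perp Ω (Submodule.map A.mulVecLin V)
      = Submodule.comap ((-Ω) * Aᵀ * Ω).mulVecLin (perp Ω V) := by
  have key : ∀ (v w : Fin m → ℂ),
      v ⬝ᵥ Ω.mulVec (((-Ω) * Aᵀ * Ω).mulVec w) = (A.mulVec v) ⬝ᵥ Ω.mulVec w := by
    intro v w
    have hm : Ω * (-Ω * Aᵀ * Ω) = Aᵀ * Ω := by
      rw [← Matrix.mul_assoc, ← Matrix.mul_assoc, hΩ, Matrix.one_mul]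
    rw [Matrix.mulVec_mulVec, hm, ← Matrix.mulVec_mulVec, Matrix.dotProduct_mulVec,
      Matrix.vecMul_transpose]
  ext w
  simp only [Submodule.mem_comap, mem_perp, Matrix.mulVecLin_apply]
  constructor
  · intro h v hv
    rw [key]
    exact h (A.mulVec v) ⟨v, hv, rfl⟩
  · rintro h u ⟨v, hv, rfl⟩
    rw [Matrix.mulVecLin_apply, ← key]
    exact h v hv

lemma omega_mul_omega {n : ℕ} (hn : 0 < n) : OmegaStd n * OmegaStd n = -1 := by
  ext a c
  have ha := a.isLt
  have hc := c.isLt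
  rw [Matrix.mul_apply]
  have step : ∀ b : Fin (2*n),
      OmegaStd n a b * OmegaStd n b c
        = if (b : ℕ) = 2*n - 1 - (a : ℕ) then
            (-1 : ℂ)^(a : ℕ) * OmegaStd n b c else 0 := by
    intro b
    have hb := b.isLt
    by_cases h : (b : ℕ) = 2*n - 1 - (a : ℕ)
    · rw [if_pos h, OmegaStd, if_pos (by omega)]
    · rw [if_neg h, OmegaStd]
      rw [if_neg (by omega), zero_mul]
  rw [Finset.sum_congr rfl (fun b _ => step b), sum_if_nat, dif_pos (by omega)]
  simp only [OmegaStd, Matrix.neg_apply, Matrix.one_apply]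
  by_cases h : a = c
  · subst h
    rw [if_pos rfl, if_pos (by omega), ← pow_add]
    have : (a : ℕ) + (2*n - 1 - (a : ℕ)) = 2*n - 1 := by omega
    rw [this]
    have hodd : Odd (2*n - 1) := ⟨n - 1, by omega⟩
    rw [hodd.neg_one_pow]
  · rw [if_neg (fun hc2 => h (Fin.ext (by omega))), if_neg (fun hc2 => h hc2), neg_zero, mul_zero]

lemma omega_mul_shift {n : ℕ} (hn : 0 < n) :
    OmegaStd n * shiftMat n = -((shiftMat n)ᵀ * OmegaStd n) := by
  ext a c
  have ha := a.isLt
  have hc := c.isLt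
  rw [Matrix.neg_apply, Matrix.mul_apply, Matrix.mul_apply]
  have stepL : ∀ b : Fin (2*n),
      OmegaStd n a b * shiftMat n b c
        = if (b : ℕ) = (c : ℕ) + 1 then OmegaStd n a b else 0 := by
    intro b
    by_cases h : (b : ℕ) = (c : ℕ) + 1
    · rw [if_pos h, shiftMat, if_pos h, mul_one]
    · rw [if_neg h, shiftMat, if_neg h, mul_zero]
  have stepR : ∀ b : Fin (2*n),
      (shiftMat n)ᵀ a b * OmegaStd n b c
        = if (b : ℕ) = (a : ℕ) + 1 then OmegaStd n b c else 0 := by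
    intro b
    by_cases h : (b : ℕ) = (a : ℕ) + 1
    · rw [if_pos h, Matrix.transpose_apply, shiftMat, if_pos h, one_mul]
    · rw [if_neg h, Matrix.transpose_apply, shiftMat, if_neg h, zero_mul]
  rw [Finset.sum_congr rfl (fun b _ => stepL b), Finset.sum_congr rfl (fun b _ => stepR b),
    sum_if_nat, sum_if_nat]
  by_cases h1 : (c : ℕ) + 1 < 2*n
  · rw [dif_pos h1]
    by_cases h2 : (a : ℕ) + 1 < 2*n
    · rw [dif_pos h2]
      simp only [OmegaStd, Fin.val_mk]
      by_cases h : (a : ℕ) + (c : ℕ) + 2 = 2*n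
      · rw [if_pos (by omega), if_pos (by omega), pow_succ]
        ring
      · rw [if_neg (by omega), if_neg (by omega), neg_zero]
    · rw [dif_neg h2, neg_zero]
      simp only [OmegaStd, Fin.val_mk]
      rw [if_neg (by omega)]
  · rw [dif_neg h1]
    by_cases h2 : (a : ℕ) + 1 < 2*n
    · rw [dif_pos h2]
      simp only [OmegaStd, Fin.val_mk]
      rw [if_neg (by omega), neg_zero]
    · rw [dif_neg h2, neg_zero]

lemma omega_mulVec {n : ℕ} (hn : 0 < n) (w : Fin (2*n) → ℂ) (a b : Fin (2*n))
    (hab : (a : ℕ) + (b : ℕ) = 2*n - 1) :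
    (OmegaStd n).mulVec w a = (-1 : ℂ)^(a : ℕ) * w b := by
  have ha := a.isLt
  have hb := b.isLt
  rw [Matrix.mulVec, dotProduct]
  have step : ∀ b' : Fin (2*n),
      OmegaStd n a b' * w b'
        = if (b' : ℕ) = (b : ℕ) then (-1 : ℂ)^(a : ℕ) * w b' else 0 := by
    intro b'
    by_cases h : (b' : ℕ) = (b : ℕ)
    · rw [if_pos h, OmegaStd, if_pos (by omega)]
    · rw [if_neg h, OmegaStd, if_neg (by omega), zero_mul]
  rw [Finset.sum_congr rfl (fun b' _ => step b'), sum_if_nat, dif_pos hb, Fin.eta]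

lemma bvec_dot {n : ℕ} (u : Fin (2*n) → ℂ) (a : Fin (2*n)) {j : ℕ}
    (haj : (a : ℕ) + 1 = j) : bvec n j ⬝ᵥ u = u a := by
  rw [dotProduct]
  have step : ∀ b : Fin (2*n),
      bvec n j b * u b = if (b : ℕ) = (a : ℕ) then u b else 0 := by
    intro b
    by_cases h : (b : ℕ) = (a : ℕ)
    · rw [if_pos h, bvec, if_pos (by omega), one_mul]
    · rw [if_neg h, bvec, if_neg (by omega), zero_mul]
  rw [Finset.sum_congr rfl (fun b _ => step b), sum_if_nat, dif_pos a.isLt, Fin.eta]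

lemma perp_coordSub {n : ℕ} (hn : 0 < n) {K : Finset ℕ} (hK : K ⊆ Finset.Icc 1 (2*n)) :
    perp (OmegaStd n) (coordSub n K) = coordSub n (Rset n K) := by
  rw [Rset, coordSub_eq_coordSet (Finset.Icc 1 (2*n) \ K.image (fun j => 2*n + 1 - j))]
  ext w
  rw [coordSub, mem_perp_span, mem_coordSet]
  have key : ∀ j, 1 ≤ j → j ≤ 2*n → ∀ t : Fin (2*n), (t : ℕ) = 2*n - j →
      (bvec n j ⬝ᵥ (OmegaStd n).mulVec w = 0 ↔ w t = 0) := by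
    intro j hj1 hj2 t ht
    have htlt := t.isLt
    have hrev : ((t.rev : Fin (2*n)) : ℕ) = 2*n - ((t : ℕ) + 1) := Fin.val_rev t
    rw [bvec_dot ((OmegaStd n).mulVec w) t.rev (by omega),
      omega_mulVec hn w t.rev t (by omega)]
    constructor
    · intro h
      rcases mul_eq_zero.1 h with h' | h'
      · exact absurd h' (pow_ne_zero _ (by norm_num))
      · exact h'
    · intro h
      rw [h, mul_zero]
  constructor
  · intro H t ht
    have htlt := t.isLt
    have htmem : (t : ℕ) + 1 ∈ Finset.Icc 1 (2*n) := by
      rw [Finset.mem_Icc]; omega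
    have hmem : (t : ℕ) + 1 ∈ K.image (fun j => 2*n + 1 - j) := by
      by_contra hc
      exact ht (Finset.mem_sdiff.2 ⟨htmem, hc⟩)
    rw [Finset.mem_image] at hmem
    obtain ⟨j, hj, hje⟩ := hmem
    have hb := hK hj
    rw [Finset.mem_Icc] at hb
    exact (key j hb.1 hb.2 t (by omega)).1 (H (bvec n j) ⟨j, hj, rfl⟩)
  · rintro H v ⟨j, hj, rfl⟩
    have hb := hK hj
    rw [Finset.mem_Icc] at hb
    refine (key j hb.1 hb.2 ⟨2*n - j, by omega⟩ rfl).2 (H _ ?_)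
    intro hc
    rw [Finset.mem_sdiff] at hc
    exact hc.2 (Finset.mem_image.2 ⟨j, hj, show 2*n + 1 - j = 2*n - j + 1 by omega⟩)

lemma shiftMat_pow_apply {n : ℕ} (k : ℕ) :
    ∀ a b : Fin (2*n), ((shiftMat n)^k) a b = if (a : ℕ) = (b : ℕ) + k then (1 : ℂ) else 0 := by
  induction k with
  | zero =>
    intro a b
    rw [pow_zero, Matrix.one_apply]
    by_cases h : a = b
    · rw [if_pos h, if_pos (by rw [h]; omega)]
    · rw [if_neg h, if_neg (fun hc => h (Fin.ext (by omega)))]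
  | succ k ih =>
    intro a c
    rw [pow_succ, Matrix.mul_apply]
    have step : ∀ b : Fin (2*n),
        ((shiftMat n)^k) a b * shiftMat n b c
          = if (b : ℕ) = (c : ℕ) + 1 then ((shiftMat n)^k) a b else 0 := by
      intro b
      by_cases h : (b : ℕ) = (c : ℕ) + 1
      · rw [if_pos h, shiftMat, if_pos h, mul_one]
      · rw [if_neg h, shiftMat, if_neg h, mul_zero]
    rw [Finset.sum_congr rfl (fun b _ => step b), sum_if_nat]
    have ha := a.isLt
    have hc := c.isLt
    by_cases h1 : (c : ℕ) + 1 < 2*n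
    · rw [dif_pos h1, ih a ⟨(c : ℕ) + 1, h1⟩]
      simp only [Fin.val_mk]
      by_cases h : (a : ℕ) = (c : ℕ) + (k + 1)
      · rw [if_pos (by omega), if_pos h]
      · rw [if_neg (by omega), if_neg h]
    · rw [dif_neg h1, if_neg (by omega)]

/-- the set `{j + k : j ∈ K, j + k ≤ 2n}`. -/
def shiftSet (n k : ℕ) (K : Finset ℕ) : Finset ℕ :=
  (K.filter (fun j => j + k ≤ 2*n)).image (· + k)

lemma shiftSet_subset {n k : ℕ} {K : Finset ℕ} (hK : K ⊆ Finset.Icc 1 (2*n)) :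
    shiftSet n k K ⊆ Finset.Icc 1 (2*n) := by
  intro x hx
  rw [shiftSet, Finset.mem_image] at hx
  obtain ⟨j, hj, rfl⟩ := hx
  rw [Finset.mem_filter] at hj
  have := hK hj.1
  rw [Finset.mem_Icc] at this ⊢
  omega

lemma shiftpow_mulVec_bvec {n : ℕ} (k j : ℕ) (hj1 : 1 ≤ j) (hj2 : j ≤ 2*n) :
    ((shiftMat n)^k).mulVec (bvec n j)
      = if j + k ≤ 2*n then bvec n (j + k) else 0 := by
  funext a
  have ha := a.isLt
  rw [Matrix.mulVec, dotProduct]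
  have step : ∀ b : Fin (2*n),
      ((shiftMat n)^k) a b * bvec n j b
        = if (b : ℕ) = j - 1 then (if (a : ℕ) = (b : ℕ) + k then (1:ℂ) else 0) else 0 := by
    intro b
    by_cases h : (b : ℕ) = j - 1
    · have hb : bvec n j b = 1 := by rw [bvec]; exact if_pos (by omega)
      rw [hb, mul_one, if_pos h, shiftMat_pow_apply]
    · have hb : bvec n j b = 0 := by rw [bvec]; exact if_neg (by omega)
      rw [hb, mul_zero, if_neg h]
  rw [Finset.sum_congr rfl (fun b _ => step b), sum_if_nat, dif_pos (show j - 1 < 2*n by omega)]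
  simp only [Fin.val_mk]
  by_cases hc : j + k ≤ 2*n
  · rw [if_pos hc]
    show _ = bvec n (j + k) a
    rw [bvec]
    by_cases h : (a : ℕ) = j - 1 + k
    · rw [if_pos h, if_pos (by omega)]
    · rw [if_neg h, if_neg (by omega)]
  · rw [if_neg hc, if_neg (by omega)]
    rfl

lemma map_shiftpow_coordSub {n : ℕ} (k : ℕ) {K : Finset ℕ} (hK : K ⊆ Finset.Icc 1 (2*n)) :
    Submodule.map ((shiftMat n)^k).mulVecLin (coordSub n K)
      = coordSub n (shiftSet n k K) := by
  rw [coordSub, coordSub, Submodule.map_span]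
  apply le_antisymm
  · rw [Submodule.span_le]
    rintro v ⟨u, ⟨j, hj, rfl⟩, rfl⟩
    have hb := hK hj
    rw [Finset.mem_Icc] at hb
    rw [Matrix.mulVecLin_apply]
    rw [show (fun t : Fin (2*n) => if (t : ℕ) + 1 = j then (1:ℂ) else 0) = bvec n j from rfl,
      shiftpow_mulVec_bvec k j hb.1 hb.2]
    by_cases hc : j + k ≤ 2*n
    · rw [if_pos hc]
      apply Submodule.subset_span
      refine ⟨j + k, ?_, rfl⟩
      rw [shiftSet, Finset.mem_image]
      exact ⟨j, Finset.mem_filter.2 ⟨hj, hc⟩, rfl⟩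
    · rw [if_neg hc]
      exact Submodule.zero_mem _
  · rw [Submodule.span_le]
    rintro v ⟨j', hj', rfl⟩
    rw [shiftSet, Finset.mem_image] at hj'
    obtain ⟨j, hjmem, rfl⟩ := hj'
    rw [Finset.mem_filter] at hjmem
    have hb := hK hjmem.1
    rw [Finset.mem_Icc] at hb
    apply Submodule.subset_span
    refine ⟨bvec n j, ⟨j, hjmem.1, rfl⟩, ?_⟩
    rw [Matrix.mulVecLin_apply, shiftpow_mulVec_bvec k j hb.1 hb.2, if_pos hjmem.2]
    rfl

lemma coordSub_single_eq_ker {n : ℕ} (hn : 0 < n) :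
    coordSub n {2*n} = LinearMap.ker (shiftMat n).mulVecLin := by
  apply le_antisymm
  · rw [coordSub, Submodule.span_le]
    rintro v ⟨j, hj, rfl⟩
    rw [Finset.mem_singleton] at hj
    subst hj
    rw [SetLike.mem_coe, LinearMap.mem_ker, Matrix.mulVecLin_apply]
    have := shiftpow_mulVec_bvec (n := n) 1 (2*n) (by omega) le_rfl
    rw [pow_one] at this
    rw [show (fun t : Fin (2*n) => if (t : ℕ) + 1 = 2*n then (1:ℂ) else 0) = bvec n (2*n) from rfl,
      this, if_neg (by omega)]
  · intro w hw
    rw [LinearMap.mem_ker] at hw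
    rw [coordSub_eq_coordSet, mem_coordSet]
    intro t ht
    rw [Finset.mem_singleton] at ht
    have htlt := t.isLt
    have ht2 : (t : ℕ) + 1 < 2*n := by omega
    have := congrFun hw ⟨(t:ℕ)+1, ht2⟩
    rw [Matrix.mulVecLin_apply] at this
    simp only [Pi.zero_apply] at this
    rw [Matrix.mulVec, dotProduct] at this
    have step : ∀ b : Fin (2*n),
        shiftMat n ⟨(t:ℕ)+1, ht2⟩ b * w b = if (b : ℕ) = (t : ℕ) then w b else 0 := by
      intro b
      by_cases h : (b : ℕ) = (t : ℕ)
      · rw [if_pos h, shiftMat, if_pos (by simp only [Fin.val_mk]; omega), one_mul]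
      · rw [if_neg h, shiftMat, if_neg (by simp only [Fin.val_mk]; omega), zero_mul]
    rw [Finset.sum_congr rfl (fun b _ => step b), sum_if_nat, dif_pos t.isLt, Fin.eta] at this
    exact this

lemma Rset_subset {n : ℕ} (K : Finset ℕ) : Rset n K ⊆ Finset.Icc 1 (2*n) :=
  Finset.sdiff_subset

/-- The matrix `C(A) = (-Ω) Aᵀ Ω`. -/
noncomputable def Cmat (n : ℕ) (A : Matrix (Fin (2*n)) (Fin (2*n)) ℂ) : Matrix (Fin (2*n)) (Fin (2*n)) ℂ :=
  (-(OmegaStd n)) * Aᵀ * (OmegaStd n)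

variable {n : ℕ}

lemma omh1 (hn : 0 < n) : OmegaStd n * (-(OmegaStd n)) = 1 := by
  rw [Matrix.mul_neg, omega_mul_omega hn, neg_neg]

lemma omh2 (hn : 0 < n) : (-(OmegaStd n)) * OmegaStd n = 1 := by
  rw [Matrix.neg_mul, omega_mul_omega hn, neg_neg]

lemma om_unit (hn : 0 < n) : IsUnit (OmegaStd n) := ⟨⟨OmegaStd n, -(OmegaStd n), omh1 hn, omh2 hn⟩, rfl⟩

lemma negom_unit (hn : 0 < n) : IsUnit (-(OmegaStd n)) := ⟨⟨-(OmegaStd n), OmegaStd n, omh2 hn, omh1 hn⟩, rfl⟩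

lemma Cmat_unit (hn : 0 < n) {A : Matrix (Fin (2*n)) (Fin (2*n)) ℂ} (hA : IsUnit A) : IsUnit (Cmat n A) :=
  ((negom_unit hn).mul ((Matrix.isUnit_transpose _).2 hA)).mul (om_unit hn)

lemma shift_mul_negom (hn : 0 < n) : shiftMat n * (-(OmegaStd n)) = OmegaStd n * (shiftMat n)ᵀ := by
  have hS : shiftMat n = OmegaStd n * ((shiftMat n)ᵀ * OmegaStd n) := by
    calc shiftMat n = ((-(OmegaStd n)) * OmegaStd n) * shiftMat n := by
          rw [omh2 hn, Matrix.one_mul]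
    _ = (-(OmegaStd n)) * (OmegaStd n * shiftMat n) := by rw [Matrix.mul_assoc]
    _ = (-(OmegaStd n)) * (-((shiftMat n)ᵀ * OmegaStd n)) := by rw [omega_mul_shift hn]
    _ = OmegaStd n * ((shiftMat n)ᵀ * OmegaStd n) := by
          rw [Matrix.mul_neg, Matrix.neg_mul, neg_neg]
  calc shiftMat n * (-(OmegaStd n))
      = OmegaStd n * ((shiftMat n)ᵀ * OmegaStd n) * (-(OmegaStd n)) := by rw [← hS]
  _ = OmegaStd n * (shiftMat n)ᵀ * (OmegaStd n * (-(OmegaStd n))) := by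
        simp only [Matrix.mul_assoc]
  _ = OmegaStd n * (shiftMat n)ᵀ := by rw [omh1 hn, Matrix.mul_one]

lemma shift_Cmat (hn : 0 < n) {A B : Matrix (Fin (2*n)) (Fin (2*n)) ℂ}
    (hAB : A * shiftMat n = shiftMat n * B) :
    shiftMat n * Cmat n A = Cmat n B * shiftMat n := by
  have hSOm : (shiftMat n)ᵀ * OmegaStd n = -(OmegaStd n * shiftMat n) := by
    rw [omega_mul_shift hn, neg_neg]
  calc shiftMat n * Cmat n A
      = (shiftMat n * (-(OmegaStd n))) * (Aᵀ * OmegaStd n) := by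
        rw [Cmat]; simp only [Matrix.mul_assoc]
  _ = OmegaStd n * ((shiftMat n)ᵀ * Aᵀ) * OmegaStd n := by
        rw [shift_mul_negom hn]; simp only [Matrix.mul_assoc]
  _ = OmegaStd n * (A * shiftMat n)ᵀ * OmegaStd n := by rw [Matrix.transpose_mul]
  _ = OmegaStd n * (shiftMat n * B)ᵀ * OmegaStd n := by rw [hAB]
  _ = OmegaStd n * (Bᵀ * ((shiftMat n)ᵀ * OmegaStd n)) := by
        rw [Matrix.transpose_mul]; simp only [Matrix.mul_assoc]
  _ = OmegaStd n * (Bᵀ * (-(OmegaStd n * shiftMat n))) := by rw [hSOm]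
  _ = Cmat n B * shiftMat n := by
        rw [Cmat]
        simp only [Matrix.mul_neg, Matrix.neg_mul, Matrix.mul_assoc, neg_neg]


lemma map_ker_shift {n : ℕ} {A A' : Matrix (Fin (2*n)) (Fin (2*n)) ℂ}
    (hA : IsUnit A) (hA' : IsUnit A')
    (hcomm : shiftMat n * A = A' * shiftMat n) :
    Submodule.map A.mulVecLin (LinearMap.ker (shiftMat n).mulVecLin)
      = LinearMap.ker (shiftMat n).mulVecLin := by
  apply le_antisymm
  · rintro y ⟨x, hx, rfl⟩
    rw [SetLike.mem_coe, LinearMap.mem_ker, Matrix.mulVecLin_apply] at hx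
    rw [LinearMap.mem_ker, Matrix.mulVecLin_apply, Matrix.mulVecLin_apply,
      Matrix.mulVec_mulVec, hcomm, ← Matrix.mulVec_mulVec, hx, Matrix.mulVec_zero]
  · intro y hy
    rw [LinearMap.mem_ker, Matrix.mulVecLin_apply] at hy
    obtain ⟨x, rfl⟩ := (Matrix.mulVec_surjective_iff_isUnit.2 hA) y
    refine ⟨x, ?_, rfl⟩
    rw [SetLike.mem_coe, LinearMap.mem_ker, Matrix.mulVecLin_apply]
    apply Matrix.mulVec_injective_iff_isUnit.2 hA'
    rw [Matrix.mulVec_mulVec, ← hcomm, ← Matrix.mulVec_mulVec, hy, Matrix.mulVec_zero]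

lemma map_bot_iff {m : ℕ} {f : (Fin m → ℂ) →ₗ[ℂ] (Fin m → ℂ)} (hf : Function.Injective f)
    (p : Submodule ℂ (Fin m → ℂ)) : Submodule.map f p = ⊥ ↔ p = ⊥ := by
  constructor
  · intro hmap
    rw [Submodule.eq_bot_iff] at hmap ⊢
    intro x hx
    apply hf
    rw [map_zero]
    exact hmap (f x) ⟨x, hx, rfl⟩
  · intro hp
    rw [hp, Submodule.map_bot]

lemma shiftSet_window {n m : ℕ} {K : Finset ℕ} (hm1 : 1 ≤ m) (hm2 : m ≤ 2*n) :
    shiftSet n (2*n - m) K ∩ {2*n} = ∅ ↔ m ∉ K := by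
  constructor
  · intro hemp hmK
    have : 2*n ∈ shiftSet n (2*n - m) K ∩ {2*n} := by
      rw [Finset.mem_inter, Finset.mem_singleton]
      refine ⟨?_, rfl⟩
      rw [shiftSet, Finset.mem_image]
      exact ⟨m, Finset.mem_filter.2 ⟨hmK, by omega⟩, by omega⟩
    rw [hemp] at this
    exact absurd this (Finset.notMem_empty _)
  · intro hmK
    rw [Finset.eq_empty_iff_forall_notMem]
    intro x hx
    rw [Finset.mem_inter, Finset.mem_singleton] at hx
    obtain ⟨hx1, rfl⟩ := hx
    rw [shiftSet, Finset.mem_image] at hx1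
    obtain ⟨j, hj, hje⟩ := hx1
    rw [Finset.mem_filter] at hj
    have : j = m := by omega
    exact hmK (this ▸ hj.1)

theorem stmt_9 (n : ℕ) (hn : 0 < n) (J : ZMod (2*n) → Finset ℕ)
    (hJ : IsJP n (2*n) J)
    (hex : ∃ g, isG n g ∧ tauFixed n (actG n g (fun i => coordSub n (J i)))) :
    tauFixed n (fun i => coordSub n (J i)) ∧ RJP n J = J := by
  obtain ⟨g, ⟨hgu, hgs⟩, htau⟩ := hex
  have hJsub : ∀ i, J i ⊆ Finset.Icc 1 (2*n) := hJ.1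
  have hRsub : ∀ i, RJP n J i ⊆ Finset.Icc 1 (2*n) := fun i => Rset_subset _
  set h : ZMod (2*n) → Matrix (Fin (2*n)) (Fin (2*n)) ℂ :=
    fun i => Cmat n (g (-i)) * g i with hdef
  have hhu : ∀ i, IsUnit (h i) := fun i => (Cmat_unit hn (hgu _)).mul (hgu i)
  have hhs : ∀ i, shiftMat n * h i = h (i+1) * shiftMat n := by
    intro i
    have hAB : g (-i) * shiftMat n = shiftMat n * g (-(i+1)) := by
      have h0 := hgs (-(i+1))
      rw [show -(i+1) + 1 = -i by ring] at h0
      exact h0.symm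
    calc shiftMat n * (Cmat n (g (-i)) * g i)
        = (shiftMat n * Cmat n (g (-i))) * g i := by rw [Matrix.mul_assoc]
      _ = (Cmat n (g (-(i+1))) * shiftMat n) * g i := by rw [shift_Cmat hn hAB]
      _ = Cmat n (g (-(i+1))) * (shiftMat n * g i) := by rw [Matrix.mul_assoc]
      _ = Cmat n (g (-(i+1))) * (g (i+1) * shiftMat n) := by rw [hgs i]
      _ = (Cmat n (g (-(i+1))) * g (i+1)) * shiftMat n := by rw [Matrix.mul_assoc]
  have hinj : ∀ i, Function.Injective (h i).mulVecLin := fun i =>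
    Matrix.mulVec_injective_iff_isUnit.2 (hhu i)
  have key : ∀ i, coordSub n (RJP n J i)
      = Submodule.map (h i).mulVecLin (coordSub n (J i)) := by
    intro i
    have ht : perp (OmegaStd n) (Submodule.map (g (-i)).mulVecLin (coordSub n (J (-i))))
        = Submodule.map (g i).mulVecLin (coordSub n (J i)) := htau i
    rw [perp_map (OmegaStd n) (omh1 hn) (g (-i)), perp_coordSub hn (hJsub (-i))] at ht
    have ht2 : Submodule.comap (Cmat n (g (-i))).mulVecLin (coordSub n (RJP n J i))
        = Submodule.map (g i).mulVecLin (coordSub n (J i)) := ht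
    have hsurj : Function.Surjective (Cmat n (g (-i))).mulVecLin :=
      Matrix.mulVec_surjective_iff_isUnit.2 (Cmat_unit hn (hgu _))
    have h5 := congrArg (Submodule.map (Cmat n (g (-i))).mulVecLin) ht2
    rw [Submodule.map_comap_eq_of_surjective hsurj, ← Submodule.map_comp,
      ← Matrix.mulVecLin_mul] at h5
    exact h5
  have hpow : ∀ (k : ℕ) (i : ZMod (2*n)),
      (shiftMat n)^k * h i = h (i + (k : ZMod (2*n))) * (shiftMat n)^k := by
    intro k
    induction k with
    | zero =>
      intro i
      rw [pow_zero, Matrix.one_mul, Matrix.mul_one, Nat.cast_zero, add_zero]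
    | succ k ih =>
      intro i
      calc (shiftMat n)^(k+1) * h i
          = (shiftMat n)^k * (shiftMat n * h i) := by rw [pow_succ, Matrix.mul_assoc]
        _ = (shiftMat n)^k * (h (i+1) * shiftMat n) := by rw [hhs i]
        _ = ((shiftMat n)^k * h (i+1)) * shiftMat n := by rw [← Matrix.mul_assoc]
        _ = (h (i+1+(k : ZMod (2*n))) * (shiftMat n)^k) * shiftMat n := by rw [ih (i+1)]
        _ = h (i + ((k+1 : ℕ) : ZMod (2*n))) * (shiftMat n)^(k+1) := by
            rw [Matrix.mul_assoc, ← pow_succ]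
            congr 2
            push_cast
            ring_nf
  have keyk : ∀ (k : ℕ) (i : ZMod (2*n)),
      coordSub n (shiftSet n k (RJP n J i))
        = Submodule.map (h (i + (k : ZMod (2*n)))).mulVecLin
            (coordSub n (shiftSet n k (J i))) := by
    intro k i
    have h6 := congrArg (Submodule.map ((shiftMat n)^k).mulVecLin) (key i)
    rw [map_shiftpow_coordSub k (hRsub i), ← Submodule.map_comp, ← Matrix.mulVecLin_mul,
      hpow k i, Matrix.mulVecLin_mul, Submodule.map_comp,
      map_shiftpow_coordSub k (hJsub i)] at h6
    exact h6
  have hW : ∀ i, Submodule.map (h i).mulVecLin (coordSub n {2*n}) = coordSub n {2*n} := by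
    intro i
    rw [coordSub_single_eq_ker hn]
    exact map_ker_shift (hhu i) (hhu (i+1)) (hhs i)
  have hmemiff : ∀ i m, m ∈ RJP n J i ↔ m ∈ J i := by
    intro i m
    by_cases hm : m ∈ Finset.Icc 1 (2*n)
    · rw [Finset.mem_Icc] at hm
      set k := 2*n - m with hk
      have h3 := keyk k i
      have e1 : coordSub n (shiftSet n k (RJP n J i)) ⊓ coordSub n {2*n}
          = coordSub n (shiftSet n k (RJP n J i) ∩ {2*n}) := by
        rw [coordSub_eq_coordSet, coordSub_eq_coordSet, coordSub_eq_coordSet, coordSet_inf]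
      have e2 : coordSub n (shiftSet n k (J i)) ⊓ coordSub n {2*n}
          = coordSub n (shiftSet n k (J i) ∩ {2*n}) := by
        rw [coordSub_eq_coordSet, coordSub_eq_coordSet, coordSub_eq_coordSet, coordSet_inf]
      have e3 : coordSub n (shiftSet n k (RJP n J i) ∩ {2*n})
          = Submodule.map (h (i + (k : ZMod (2*n)))).mulVecLin
              (coordSub n (shiftSet n k (J i) ∩ {2*n})) := by
        rw [← e1, ← e2, h3, Submodule.map_inf _ (hinj _), hW (i + (k : ZMod (2*n)))]
      have hsub1 : shiftSet n k (RJP n J i) ∩ {2*n} ⊆ Finset.Icc 1 (2*n) := by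
        intro x hx
        rw [Finset.mem_inter, Finset.mem_singleton] at hx
        rw [Finset.mem_Icc]
        omega
      have hsub2 : shiftSet n k (J i) ∩ {2*n} ⊆ Finset.Icc 1 (2*n) := by
        intro x hx
        rw [Finset.mem_inter, Finset.mem_singleton] at hx
        rw [Finset.mem_Icc]
        omega
      have hbot : (shiftSet n k (RJP n J i) ∩ {2*n} = ∅)
          ↔ (shiftSet n k (J i) ∩ {2*n} = ∅) := by
        rw [← coordSub_eq_bot_iff hsub1, ← coordSub_eq_bot_iff hsub2, e3,
          map_bot_iff (hinj _)]
      have w1 := shiftSet_window (n := n) (K := RJP n J i) hm.1 hm.2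
      have w2 := shiftSet_window (n := n) (K := J i) hm.1 hm.2
      have h4 : (m ∉ RJP n J i) ↔ (m ∉ J i) := by
        rw [← w1, ← w2]
        exact hbot
      exact not_iff_not.1 h4
    · constructor
      · intro hc
        exact absurd (hRsub i hc) hm
      · intro hc
        exact absurd (hJsub i hc) hm
  have hRJ : ∀ i, RJP n J i = J i := fun i => Finset.ext (fun m => hmemiff i m)
  refine ⟨?_, funext hRJ⟩
  intro i
  show perp (OmegaStd n) (coordSub n (J (-i))) = coordSub n (J i)
  rw [perp_coordSub hn (hJsub (-i))]
  rw [show Rset n (J (-i)) = RJP n J i from rfl, hRJ i]
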